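/- Subtraction as the limit of the XOR/carry iteration: let a b : ℤ and define u, v : ℕ → ℤ by u 0 = a ^^^ (~~~b) ^^^ 1, v 0 = 2 * ((a &&& (~~~b)) ^^^ ((a ^^^ (~~~b)) &&& 1)), u (k+1) = u k ^^^ v k, and v (k+1) = 2 * (u k &&& v k). Then in the 2-adic integers ℤ_[2], the sequence ((u k : ℤ_[2]))_k converges to ((a - b : ℤ) : ℤ_[2]) and the carry sequence ((v k : ℤ_[2]))_k converges to 0; that is, (a-b, 0) is the limiting fixed point of the carry map started at the three-operand sum a + bᶜ + 1. -/

import Mathlib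

instance : XorOp ℤ := ⟨Int.xor⟩
instance : AndOp ℤ := ⟨Int.land⟩

private lemma int_not_eq (b : ℤ) : ~~~b = -b - 1 := by
  cases b with
  | ofNat n =>
      show Int.negSucc n = _
      rw [Int.negSucc_eq]; simp only [Int.ofNat_eq_coe]; omega
  | negSucc n =>
      show (n : ℤ) = _
      rw [Int.negSucc_eq]; omega

private lemma dvd_diff (n : ℕ) (x y : ℤ) :
    (2 ^ n : ℤ) ∣ (Int.xor x y + 2 * Int.land x y - (x + y)) := by
  induction n generalizing x y with
  | zero => exact one_dvd _
  | succ n ih =>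
    obtain ⟨c, hc⟩ := ih (Int.div2 x) (Int.div2 y)
    have hxval := Int.bodd_add_div2 x
    have hyval := Int.bodd_add_div2 y
    have hxor := Int.lxor_bit (Int.bodd x) (Int.div2 x) (Int.bodd y) (Int.div2 y)
    have hland := Int.land_bit (Int.bodd x) (Int.div2 x) (Int.bodd y) (Int.div2 y)
    rw [Int.bit_decomp, Int.bit_decomp] at hxor hland
    refine ⟨c, ?_⟩
    rw [hxor, hland, Int.bit_val, Int.bit_val, pow_succ]
    cases hbx : Int.bodd x <;> cases hby : Int.bodd y <;>
      rw [hbx] at hxval <;> rw [hby] at hyval <;>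
      simp only [hbx, hby, cond_true, cond_false, Bool.and_self, Bool.and_false,
        Bool.false_and, Bool.true_and, bne_self_eq_false, Bool.false_bne, Bool.true_bne,
        Bool.not_true, Bool.not_false] at hxval hyval ⊢ <;>
      linarith [hc]

private lemma xor_land_add (x y : ℤ) :
    Int.xor x y + 2 * Int.land x y = x + y := by
  have h : ∀ n : ℕ, (2 ^ n : ℤ) ∣ (Int.xor x y + 2 * Int.land x y - (x + y)) :=
    fun n => dvd_diff n x y
  set D := Int.xor x y + 2 * Int.land x y - (x + y) with hD
  have hzero : D = 0 := by
    refine Int.eq_zero_of_abs_lt_dvd (h (D.natAbs + 1)) ?_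
    rw [Int.abs_eq_natAbs]
    have hn : D.natAbs < 2 ^ (D.natAbs + 1) :=
      lt_of_lt_of_le Nat.lt_two_pow_self (Nat.pow_le_pow_right (by norm_num) (Nat.le_succ _))
    exact_mod_cast hn
  linarith [hzero]

private lemma bodd_land (x y : ℤ) :
    Int.bodd (Int.land x y) = (Int.bodd x && Int.bodd y) := by
  have h := Int.land_bit (Int.bodd x) (Int.div2 x) (Int.bodd y) (Int.div2 y)
  rw [Int.bit_decomp, Int.bit_decomp] at h
  rw [h, Int.bodd_bit]

private lemma bodd_xor (x y : ℤ) :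
    Int.bodd (Int.xor x y) = xor (Int.bodd x) (Int.bodd y) := by
  have h := Int.lxor_bit (Int.bodd x) (Int.div2 x) (Int.bodd y) (Int.div2 y)
  rw [Int.bit_decomp, Int.bit_decomp] at h
  rw [h, Int.bodd_bit]

private lemma land_zero (x : ℤ) : Int.land x 0 = 0 := by
  cases x <;> simp [Int.land, Nat.ldiff]

private lemma land_one (x : ℤ) : Int.land x 1 = cond (Int.bodd x) 1 0 := by
  have h := Int.land_bit (Int.bodd x) (Int.div2 x) true 0
  rw [Int.bit_decomp] at h
  have h1 : Int.bit true 0 = 1 := rfl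
  rw [h1] at h
  rw [h, Int.bit_val, land_zero, Bool.and_true]
  cases Int.bodd x <;> simp

private lemma bodd_false_of_two_dvd {y : ℤ} (h : (2:ℤ) ∣ y) : Int.bodd y = false := by
  have h2 := Int.bodd_add_div2 y
  obtain ⟨c, hcy⟩ := h
  cases hb : Int.bodd y
  · rfl
  · rw [hb] at h2; simp at h2; omega

private lemma dvd_land_right (n : ℕ) : ∀ x y : ℤ, (2 ^ n : ℤ) ∣ y → (2 ^ n : ℤ) ∣ Int.land x y := by
  induction n with
  | zero => intro x y _; exact one_dvd _
  | succ n ih =>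
    intro x y hy
    obtain ⟨c, hc⟩ := hy
    have h2 : (2:ℤ) ∣ y := ⟨2 ^ n * c, by rw [hc]; ring⟩
    have hb : Int.bodd y = false := bodd_false_of_two_dvd h2
    have hdiv : Int.div2 y = 2 ^ n * c := by
      rw [Int.div2_val, hc]
      rw [show (2:ℤ)^(n+1) * c = 2 * (2^n*c) by ring]
      exact Int.mul_ediv_cancel_left _ (by norm_num)
    have h := Int.land_bit (Int.bodd x) (Int.div2 x) (Int.bodd y) (Int.div2 y)
    rw [Int.bit_decomp, Int.bit_decomp] at h
    rw [h, hb, Bool.and_false, Int.bit_val]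
    obtain ⟨d, hd⟩ := ih (Int.div2 x) (Int.div2 y) ⟨c, hdiv⟩
    exact ⟨d, by rw [hd]; simp; ring⟩

theorem subtraction_xor_carry_limit (a b : ℤ) (u v : ℕ → ℤ)
    (hu0 : u 0 = a ^^^ (~~~b) ^^^ 1)
    (hv0 : v 0 = 2 * ((a &&& (~~~b)) ^^^ ((a ^^^ (~~~b)) &&& 1)))
    (hu : ∀ k, u (k + 1) = u k ^^^ v k)
    (hv : ∀ k, v (k + 1) = 2 * (u k &&& v k)) :
    Filter.Tendsto (fun k => ((u k : ℤ_[2]))) Filter.atTop (nhds ((a - b : ℤ) : ℤ_[2])) ∧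
    Filter.Tendsto (fun k => ((v k : ℤ_[2]))) Filter.atTop (nhds 0) := by
  have hxor : ∀ x y : ℤ, x ^^^ y = Int.xor x y := fun _ _ => rfl
  have hland : ∀ x y : ℤ, x &&& y = Int.land x y := fun _ _ => rfl
  set t := ~~~b with ht
  have hsum0 : u 0 + v 0 = a - b := by
    have hs : Int.xor a t + 2 * Int.land a t = a + t := xor_land_add a t
    set s := Int.xor a t with hsdef
    set c1 := Int.land a t with hc1def
    have hs1 : Int.xor s 1 + 2 * Int.land s 1 = s + 1 := xor_land_add s 1
    have hdisj : Int.land c1 (Int.land s 1) = 0 := by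
      rw [land_one]
      cases hbs : Int.bodd s
      · exact land_zero c1
      · rw [show (cond true 1 0 : ℤ) = 1 from rfl, land_one]
        have hbc : Int.bodd c1 = false := by
          rw [hc1def, bodd_land]
          rw [hsdef, bodd_xor] at hbs
          cases hba : Int.bodd a <;> cases hbt : Int.bodd t <;> simp_all
        rw [hbc]; rfl
    have hxoradd : Int.xor c1 (Int.land s 1) = c1 + Int.land s 1 := by
      have := xor_land_add c1 (Int.land s 1)
      rw [hdisj] at this; linarith
    rw [hu0, hv0]
    simp only [hxor, hland]
    rw [← hsdef, ← hc1def, hxoradd]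
    have hnb := int_not_eq b
    rw [← ht] at hnb
    rw [hnb] at hs
    linarith
  have hsum : ∀ k, u k + v k = a - b := by
    intro k
    induction k with
    | zero => exact hsum0
    | succ k ihk =>
      rw [hu k, hv k, hxor, hland]
      have := xor_land_add (u k) (v k)
      linarith
  have hdvd : ∀ k, (2 ^ (k + 1) : ℤ) ∣ v k := by
    intro k
    induction k with
    | zero => rw [hv0]; exact ⟨_, rfl⟩
    | succ k ihk =>
      rw [hv k, hland, pow_succ, mul_comm ((2:ℤ)^(k+1)) 2]
      exact mul_dvd_mul_left 2 (dvd_land_right (k + 1) (u k) (v k) ihk)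
  have hvlim : Filter.Tendsto (fun k => ((v k : ℤ_[2]))) Filter.atTop (nhds 0) := by
    rw [tendsto_zero_iff_norm_tendsto_zero]
    have hbound : ∀ k : ℕ, ‖((v k : ℤ_[2]))‖ ≤ (1/2 : ℝ) ^ (k + 1) := by
      intro k
      have hle := (PadicInt.norm_int_le_pow_iff_dvd (p := 2) (k := v k) (n := k + 1)).mpr (hdvd k)
      calc ‖((v k : ℤ_[2]))‖ ≤ ((2:ℕ) : ℝ) ^ (-(k + 1 : ℕ) : ℤ) := hle
        _ = (1/2 : ℝ) ^ (k + 1) := by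
            rw [zpow_neg, ← zpow_natCast]
            push_cast
            rw [← inv_zpow]
            norm_num
    refine squeeze_zero (fun k => norm_nonneg _) hbound ?_
    have h12 := tendsto_pow_atTop_nhds_zero_of_lt_one (by norm_num : (0:ℝ) ≤ 1/2) (by norm_num)
    exact h12.comp (Filter.tendsto_add_atTop_nat 1)
  refine ⟨?_, hvlim⟩
  have hueq : (fun k => ((u k : ℤ_[2]))) =
      fun k => ((a - b : ℤ) : ℤ_[2]) - ((v k : ℤ_[2])) := by
    funext k
    have hk : u k = (a - b) - v k := by linarith [hsum k]
    rw [hk]; push_cast; ring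
  rw [hueq]
  have hfin := Filter.Tendsto.sub
    (tendsto_const_nhds : Filter.Tendsto (fun _ : ℕ => ((a - b : ℤ) : ℤ_[2])) Filter.atTop _) hvlim
  simpa using hfin
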